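/- Let (U_j)_{j≥1} and (V_k)_{k≥1} be two independent sequences, each consisting of i.i.d. random elements, and let H be a bounded measurable real-valued function with E[H(U_1, U_2, V_1)] = 0. Then T_N = N^{-3} Σ_{i=1}^N Σ_{j=1}^N Σ_{k=1}^N H(U_i, U_j, V_k) converges to 0 almost surely as N → ∞. -/

import Mathlib

open MeasureTheory ProbabilityTheory Filter

lemma map_prodProdProdComm {A B C D : Type*} [MeasurableSpace A] [MeasurableSpace B]
    [MeasurableSpace C] [MeasurableSpace D]
    (a : Measure A) (b : Measure B) (c : Measure C) (d : Measure D)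
    [SFinite a] [SFinite b] [SFinite c] [SFinite d] :
    Measure.map (fun p : (A × B) × (C × D) => ((p.1.1, p.2.1), (p.1.2, p.2.2)))
      ((a.prod b).prod (c.prod d)) = (a.prod c).prod (b.prod d) := by
  have h1 := measurePreserving_prodAssoc a b (c.prod d)
  have hτ := (measurePreserving_prodAssoc c b d).comp
    (((Measure.measurePreserving_swap (μ := b) (ν := c)).prod (MeasurePreserving.id d)).comp
      ((measurePreserving_prodAssoc b c d).symm _))
  have h2 := (MeasurePreserving.id a).prod hτ
  have h3 := (measurePreserving_prodAssoc a c (b.prod d)).symm _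
  have htot := (h3.comp (h2.comp h1))
  have heq : (fun p : (A × B) × (C × D) => ((p.1.1, p.2.1), (p.1.2, p.2.2)))
      = (⇑(MeasurableEquiv.prodAssoc).symm ∘
        ((Prod.map id (⇑MeasurableEquiv.prodAssoc ∘ (Prod.map Prod.swap id ∘ ⇑(MeasurableEquiv.prodAssoc).symm))) ∘
          ⇑(MeasurableEquiv.prodAssoc : (A × B) × (C × D) ≃ᵐ A × B × C × D))) := by
    funext p; rfl
  rw [heq]
  exact htot.map_eq

lemma indepFun_prodMk_prodMk {Ω A B A' B' : Type*} [MeasurableSpace Ω] [MeasurableSpace A]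
    [MeasurableSpace B] [MeasurableSpace A'] [MeasurableSpace B']
    (P : Measure Ω) [IsProbabilityMeasure P]
    (X : Ω → A) (Y : Ω → B) (X' : Ω → A') (Y' : Ω → B')
    (hX : Measurable X) (hY : Measurable Y) (hX' : Measurable X') (hY' : Measurable Y')
    (hXX' : IndepFun X X' P) (hYY' : IndepFun Y Y' P)
    (hXY : IndepFun X Y P) (hX'Y' : IndepFun X' Y' P)
    (hblock : IndepFun (fun ω => (X ω, X' ω)) (fun ω => (Y ω, Y' ω)) P) :
    IndepFun (fun ω => (X ω, Y ω)) (fun ω => (X' ω, Y' ω)) P := by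
  haveI : IsProbabilityMeasure (P.map X) := Measure.isProbabilityMeasure_map hX.aemeasurable
  haveI : IsProbabilityMeasure (P.map Y) := Measure.isProbabilityMeasure_map hY.aemeasurable
  haveI : IsProbabilityMeasure (P.map X') := Measure.isProbabilityMeasure_map hX'.aemeasurable
  haveI : IsProbabilityMeasure (P.map Y') := Measure.isProbabilityMeasure_map hY'.aemeasurable
  rw [indepFun_iff_map_prod_eq_prod_map_map ((hX.prodMk hY).aemeasurable)
    ((hX'.prodMk hY').aemeasurable)]
  have h1 : P.map (fun ω => ((X ω, Y ω), (X' ω, Y' ω)))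
      = Measure.map (fun p : (A × A') × (B × B') => ((p.1.1, p.2.1), (p.1.2, p.2.2)))
        (P.map (fun ω => ((X ω, X' ω), (Y ω, Y' ω)))) := by
    rw [Measure.map_map (by fun_prop) (by fun_prop)]
    rfl
  rw [h1,
    (indepFun_iff_map_prod_eq_prod_map_map ((hX.prodMk hX').aemeasurable)
      ((hY.prodMk hY').aemeasurable)).mp hblock,
    (indepFun_iff_map_prod_eq_prod_map_map hX.aemeasurable hX'.aemeasurable).mp hXX',
    (indepFun_iff_map_prod_eq_prod_map_map hY.aemeasurable hY'.aemeasurable).mp hYY',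
    map_prodProdProdComm,
    ← (indepFun_iff_map_prod_eq_prod_map_map hX.aemeasurable hY.aemeasurable).mp hXY,
    ← (indepFun_iff_map_prod_eq_prod_map_map hX'.aemeasurable hY'.aemeasurable).mp hX'Y']


set_option maxHeartbeats 2000000 in
/-- **Strong law of large numbers for three-index averages.** If `(U_j)` and `(V_k)` are
two independent i.i.d. sequences and `H` is bounded measurable with
`E[H(U_1, U_2, V_1)] = 0`, then
`T_N = N^{-3} Σ_{i,j,k ≤ N} H(U_i, U_j, V_k) → 0` almost surely. -/
theorem three_index_strong_law
    {Ω α β : Type*} [MeasurableSpace Ω] [MeasurableSpace α] [MeasurableSpace β]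
    (P : Measure Ω) [IsProbabilityMeasure P]
    (U : ℕ → Ω → α) (V : ℕ → Ω → β)
    (hUmeas : ∀ j, Measurable (U j)) (hVmeas : ∀ k, Measurable (V k))
    (hUindep : iIndepFun U P)
    (hVindep : iIndepFun V P)
    (hUid : ∀ j, Measure.map (U j) P = Measure.map (U 0) P)
    (hVid : ∀ k, Measure.map (V k) P = Measure.map (V 0) P)
    (hUV : IndepFun (fun ω j => U j ω) (fun ω k => V k ω) P)
    (H : α × α × β → ℝ) (hHmeas : Measurable H) (C : ℝ) (hHbdd : ∀ x, |H x| ≤ C)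
    (hHcentered : ∫ ω, H (U 0 ω, U 1 ω, V 0 ω) ∂P = 0) :
    ∀ᵐ ω ∂P, Tendsto
      (fun N : ℕ => ((N : ℝ) ^ 3)⁻¹ * ∑ i ∈ Finset.range N, ∑ j ∈ Finset.range N,
        ∑ k ∈ Finset.range N, H (U i ω, U j ω, V k ω))
      atTop (nhds 0) := by
  classical
  set μ : Measure α := P.map (U 0) with hμ
  set ν : Measure β := P.map (V 0) with hν
  haveI : IsProbabilityMeasure μ := Measure.isProbabilityMeasure_map (hUmeas 0).aemeasurable
  haveI : IsProbabilityMeasure ν := Measure.isProbabilityMeasure_map (hVmeas 0).aemeasurable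
  set X : ℕ × ℕ × ℕ → Ω → ℝ := fun t ω => H (U t.1 ω, U t.2.1 ω, V t.2.2 ω) with hX
  have hXmeas : ∀ t, Measurable (X t) := fun t =>
    hHmeas.comp (((hUmeas t.1).prodMk ((hUmeas t.2.1).prodMk (hVmeas t.2.2))))
  have hXint : ∀ t, Integrable (X t) P := fun t =>
    (integrable_const C).mono' (hXmeas t).aestronglyMeasurable
      (ae_of_all _ fun ω => by simpa [Real.norm_eq_abs] using hHbdd _)
  have hXXint : ∀ t t', Integrable (fun ω => X t ω * X t' ω) P := fun t t' =>
    (integrable_const (C * C)).mono' ((hXmeas t).mul (hXmeas t')).aestronglyMeasurable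
      (ae_of_all _ fun ω => by
        simp only [Real.norm_eq_abs, abs_mul]
        exact mul_le_mul (hHbdd _) (hHbdd _) (abs_nonneg _)
          (le_trans (abs_nonneg (H (U t.1 ω, U t.2.1 ω, V t.2.2 ω))) (hHbdd _)))
  -- measurable selections
  have hφ : ∀ i j : ℕ, Measurable (fun f : ℕ → α => (f i, f j)) := fun i j =>
    (measurable_pi_apply i).prodMk (measurable_pi_apply j)
  -- pair laws
  have hpairlaw : ∀ i j : ℕ, i ≠ j → P.map (fun ω => (U i ω, U j ω)) = μ.prod μ := by
    intro i j hij
    rw [(indepFun_iff_map_prod_eq_prod_map_map (hUmeas i).aemeasurable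
      (hUmeas j).aemeasurable).mp (hUindep.indepFun hij), hUid i, hUid j]
  have hUVpair : ∀ i j k : ℕ, IndepFun (fun ω => (U i ω, U j ω)) (V k) P := fun i j k =>
    hUV.comp (hφ i j) (measurable_pi_apply k)
  have htriplelaw : ∀ i j k : ℕ, i ≠ j →
      P.map (fun ω => ((U i ω, U j ω), V k ω)) = (μ.prod μ).prod ν := by
    intro i j k hij
    rw [(indepFun_iff_map_prod_eq_prod_map_map ((hUmeas i).prodMk (hUmeas j)).aemeasurable
      (hVmeas k).aemeasurable).mp (hUVpair i j k), hpairlaw i j hij, hVid k]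
  -- the mean-zero lemma
  set q : (α × α) × β → ℝ := fun p => H (p.1.1, p.1.2, p.2) with hq
  have hqmeas : Measurable q := hHmeas.comp (by fun_prop)
  have hkey : ∀ i j k : ℕ, i ≠ j →
      ∫ ω, X (i, j, k) ω ∂P = ∫ p, q p ∂((μ.prod μ).prod ν) := by
    intro i j k hij
    rw [← htriplelaw i j k hij,
      integral_map (((hUmeas i).prodMk (hUmeas j)).prodMk (hVmeas k)).aemeasurable
        hqmeas.aestronglyMeasurable]
  have hmean : ∀ i j k : ℕ, i ≠ j → ∫ ω, X (i, j, k) ω ∂P = 0 := by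
    intro i j k hij
    rw [hkey i j k hij, ← hkey 0 1 0 (by norm_num)]
    exact hHcentered
  have hzero : ∀ i j k i' j' k' : ℕ, i ≠ j → i' ≠ j' → i ≠ i' → i ≠ j' → j ≠ i' → j ≠ j' →
      k ≠ k' → ∫ ω, X (i, j, k) ω * X (i', j', k') ω ∂P = 0 := by
    intro i j k i' j' k' hij hij' hii' hijp hji' hjj' hkk'
    have hind : IndepFun (fun ω => ((U i ω, U j ω), V k ω))
        (fun ω => ((U i' ω, U j' ω), V k' ω)) P := by
      refine indepFun_prodMk_prodMk P _ _ _ _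
        ((hUmeas i).prodMk (hUmeas j)) (hVmeas k)
        ((hUmeas i').prodMk (hUmeas j')) (hVmeas k') ?_ ?_ ?_ ?_ ?_
      · exact hUindep.indepFun_prodMk_prodMk hUmeas i j i' j' hii' hijp hji' hjj'
      · exact hVindep.indepFun hkk'
      · exact hUVpair i j k
      · exact hUVpair i' j' k'
      · exact hUV.comp ((hφ i j).prodMk (hφ i' j'))
          ((measurable_pi_apply k).prodMk (measurable_pi_apply k'))
    have hind2 : IndepFun (X (i, j, k)) (X (i', j', k')) P := hind.comp hqmeas hqmeas
    have := hind2.integral_mul_eq_mul_integral (hXint _).aestronglyMeasurable (hXint _).aestronglyMeasurable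
    have hmul : (fun ω => X (i, j, k) ω * X (i', j', k') ω)
        = X (i, j, k) * X (i', j', k') := rfl
    rw [hmul, this, hmean i j k hij, zero_mul]
  -- counting setup
  have hCC0 : (0:ℝ) ≤ C * C := mul_self_nonneg C
  set R : ℕ → Finset (ℕ × ℕ × ℕ) :=
    fun N => Finset.range N ×ˢ (Finset.range N ×ˢ Finset.range N) with hR
  have hRcard : ∀ N, (R N).card = N ^ 3 := by
    intro N; simp [hR]; ring
  set S : ℕ → Ω → ℝ := fun N ω => ∑ t ∈ R N, X t ω with hS
  set χ : ℕ × ℕ × ℕ → ℕ × ℕ × ℕ → ℝ := fun t t' =>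
    (if t.1 = t.2.1 then (1:ℝ) else 0) + (if t'.1 = t'.2.1 then 1 else 0)
    + (if t.1 = t'.1 then 1 else 0) + (if t.1 = t'.2.1 then 1 else 0)
    + (if t.2.1 = t'.1 then 1 else 0) + (if t.2.1 = t'.2.1 then 1 else 0)
    + (if t.2.2 = t'.2.2 then 1 else 0) with hχ
  have hite0 : ∀ (p : Prop) (hp : Decidable p), (0:ℝ) ≤ @ite ℝ p hp 1 0 := by
    intro p hp; split <;> norm_num
  have hχ0 : ∀ t t', 0 ≤ χ t t' := by
    intro t t'; rw [hχ]; dsimp only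
    split_ifs <;> norm_num
  have hCC : ∀ t t', ∫ ω, X t ω * X t' ω ∂P ≤ C * C := by
    intro t t'
    calc ∫ ω, X t ω * X t' ω ∂P ≤ ∫ _ω, C * C ∂P := by
          refine integral_mono (hXXint t t') (integrable_const _) (fun ω => ?_)
          refine le_trans (le_abs_self _) ?_
          rw [abs_mul]
          exact mul_le_mul (hHbdd _) (hHbdd _) (abs_nonneg _)
            (le_trans (abs_nonneg (H (U t.1 ω, U t.2.1 ω, V t.2.2 ω))) (hHbdd _))
      _ = C * C := by simp
  have hchi_ge : ∀ t t' : ℕ × ℕ × ℕ,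
      (t.1 = t.2.1 ∨ t'.1 = t'.2.1 ∨ t.1 = t'.1 ∨ t.1 = t'.2.1 ∨ t.2.1 = t'.1
        ∨ t.2.1 = t'.2.1 ∨ t.2.2 = t'.2.2) → (1:ℝ) ≤ χ t t' := by
    intro t t' hc; rw [hχ]; dsimp only
    split_ifs <;> (try norm_num) <;> (rcases hc with h|h|h|h|h|h|h <;> contradiction)
  have hterm : ∀ t t' : ℕ × ℕ × ℕ, ∫ ω, X t ω * X t' ω ∂P ≤ (C * C) * χ t t' := by
    rintro ⟨i, j, k⟩ ⟨i', j', k'⟩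
    by_cases hgood : i ≠ j ∧ i' ≠ j' ∧ i ≠ i' ∧ i ≠ j' ∧ j ≠ i' ∧ j ≠ j' ∧ k ≠ k'
    · obtain ⟨h1, h2, h3, h4, h5, h6, h7⟩ := hgood
      rw [hzero i j k i' j' k' h1 h2 h3 h4 h5 h6 h7]
      exact mul_nonneg hCC0 (hχ0 _ _)
    · have h1 : (1:ℝ) ≤ χ (i, j, k) (i', j', k') := by
        apply hchi_ge
        by_contra hno
        push_neg at hno
        exact hgood ⟨hno.1, hno.2.1, hno.2.2.1, hno.2.2.2.1, hno.2.2.2.2.1,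
          hno.2.2.2.2.2.1, hno.2.2.2.2.2.2⟩
      calc ∫ ω, X (i, j, k) ω * X (i', j', k') ω ∂P ≤ C * C := hCC _ _
        _ = (C * C) * 1 := by ring
        _ ≤ (C * C) * χ (i, j, k) (i', j', k') := mul_le_mul_of_nonneg_left h1 hCC0
  have hsum1 : ∀ (N v : ℕ), (∑ t' ∈ R N, if v = t'.1 then (1:ℝ) else 0) ≤ (N:ℝ)^2 := by
    intro N v
    rw [Finset.sum_boole]
    have h : ((R N).filter (fun t' => v = t'.1)).card
        ≤ (Finset.range N ×ˢ Finset.range N).card := by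
      apply Finset.card_le_card_of_injOn (fun t' => t'.2)
      · intro t' ht'
        simp only [hR, Finset.mem_coe, Finset.mem_filter, Finset.mem_product] at ht' ⊢
        exact ht'.1.2
      · intro a ha b hb hab
        simp only [hR, Finset.coe_filter, Set.mem_setOf_eq, Finset.mem_product] at ha hb
        exact Prod.ext (ha.2.symm.trans hb.2) hab
    calc (((R N).filter (fun t' => v = t'.1)).card : ℝ)
        ≤ ((Finset.range N ×ˢ Finset.range N).card : ℝ) := by exact_mod_cast h
      _ = (N:ℝ)^2 := by simp [sq]
  have hsum21 : ∀ (N v : ℕ), (∑ t' ∈ R N, if v = t'.2.1 then (1:ℝ) else 0) ≤ (N:ℝ)^2 := by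
    intro N v
    rw [Finset.sum_boole]
    have h : ((R N).filter (fun t' => v = t'.2.1)).card
        ≤ (Finset.range N ×ˢ Finset.range N).card := by
      apply Finset.card_le_card_of_injOn (fun t' => (t'.1, t'.2.2))
      · intro t' ht'
        simp only [hR, Finset.mem_coe, Finset.mem_filter, Finset.mem_product] at ht' ⊢
        exact ⟨ht'.1.1, ht'.1.2.2⟩
      · intro a ha b hb hab
        simp only [hR, Finset.coe_filter, Set.mem_setOf_eq, Finset.mem_product] at ha hb
        have hab' : (a.1, a.2.2) = (b.1, b.2.2) := hab
        have h1 : a.1 = b.1 := (Prod.ext_iff.mp hab').1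
        have h2 : a.2.2 = b.2.2 := (Prod.ext_iff.mp hab').2
        exact Prod.ext h1 (Prod.ext (ha.2.symm.trans hb.2) h2)
    calc (((R N).filter (fun t' => v = t'.2.1)).card : ℝ)
        ≤ ((Finset.range N ×ˢ Finset.range N).card : ℝ) := by exact_mod_cast h
      _ = (N:ℝ)^2 := by simp [sq]
  have hsum22 : ∀ (N v : ℕ), (∑ t' ∈ R N, if v = t'.2.2 then (1:ℝ) else 0) ≤ (N:ℝ)^2 := by
    intro N v
    rw [Finset.sum_boole]
    have h : ((R N).filter (fun t' => v = t'.2.2)).card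
        ≤ (Finset.range N ×ˢ Finset.range N).card := by
      apply Finset.card_le_card_of_injOn (fun t' => (t'.1, t'.2.1))
      · intro t' ht'
        simp only [hR, Finset.mem_coe, Finset.mem_filter, Finset.mem_product] at ht' ⊢
        exact ⟨ht'.1.1, ht'.1.2.1⟩
      · intro a ha b hb hab
        simp only [hR, Finset.coe_filter, Set.mem_setOf_eq, Finset.mem_product] at ha hb
        have hab' : (a.1, a.2.1) = (b.1, b.2.1) := hab
        have h1 : a.1 = b.1 := (Prod.ext_iff.mp hab').1
        have h2 : a.2.1 = b.2.1 := (Prod.ext_iff.mp hab').2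
        exact Prod.ext h1 (Prod.ext h2 (ha.2.symm.trans hb.2))
    calc (((R N).filter (fun t' => v = t'.2.2)).card : ℝ)
        ≤ ((Finset.range N ×ˢ Finset.range N).card : ℝ) := by exact_mod_cast h
      _ = (N:ℝ)^2 := by simp [sq]
  have hsumd : ∀ (N : ℕ), (∑ t ∈ R N, if t.1 = t.2.1 then (1:ℝ) else 0) ≤ (N:ℝ)^2 := by
    intro N
    rw [Finset.sum_boole]
    have h : ((R N).filter (fun t => t.1 = t.2.1)).card
        ≤ (Finset.range N ×ˢ Finset.range N).card := by
      apply Finset.card_le_card_of_injOn (fun t => t.2)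
      · intro t ht
        simp only [hR, Finset.mem_coe, Finset.mem_filter, Finset.mem_product] at ht ⊢
        exact ht.1.2
      · intro a ha b hb hab
        simp only [hR, Finset.coe_filter, Set.mem_setOf_eq, Finset.mem_product] at ha hb
        have hab' : a.2 = b.2 := hab
        have : a.1 = b.1 := by rw [ha.2, hb.2, hab']
        exact Prod.ext this hab'
    calc (((R N).filter (fun t => t.1 = t.2.1)).card : ℝ)
        ≤ ((Finset.range N ×ˢ Finset.range N).card : ℝ) := by exact_mod_cast h
      _ = (N:ℝ)^2 := by simp [sq]
  have hmom : ∀ N : ℕ, ∫ ω, S N ω * S N ω ∂P ≤ 7 * (C * C) * (N:ℝ)^5 := by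
    intro N
    have hint2 : ∀ t ∈ R N, Integrable (fun ω => ∑ t' ∈ R N, X t ω * X t' ω) P :=
      fun t _ => integrable_finset_sum _ fun t' _ => hXXint t t'
    have e1 : ∫ ω, S N ω * S N ω ∂P = ∑ t ∈ R N, ∑ t' ∈ R N, ∫ ω, X t ω * X t' ω ∂P := by
      have hfun : (fun ω => S N ω * S N ω) = fun ω => ∑ t ∈ R N, ∑ t' ∈ R N, X t ω * X t' ω := by
        funext ω; rw [hS]; dsimp only; rw [Finset.sum_mul_sum]
      rw [hfun, integral_finset_sum _ hint2]
      exact Finset.sum_congr rfl fun t _ => integral_finset_sum _ fun t' _ => hXXint t t'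
    rw [e1]
    have e2 : ∑ t ∈ R N, ∑ t' ∈ R N, ∫ ω, X t ω * X t' ω ∂P
        ≤ ∑ t ∈ R N, ∑ t' ∈ R N, (C * C) * χ t t' :=
      Finset.sum_le_sum fun t _ => Finset.sum_le_sum fun t' _ => hterm t t'
    refine e2.trans ?_
    have inner : ∀ t ∈ R N, ∑ t' ∈ R N, χ t t'
        ≤ (N:ℝ)^3 * (if t.1 = t.2.1 then (1:ℝ) else 0) + 6 * (N:ℝ)^2 := by
      intro t _
      have hsplit : ∑ t' ∈ R N, χ t t'
          = (∑ _t' ∈ R N, (if t.1 = t.2.1 then (1:ℝ) else 0))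
          + (∑ t' ∈ R N, (if t'.1 = t'.2.1 then (1:ℝ) else 0))
          + (∑ t' ∈ R N, (if t.1 = t'.1 then (1:ℝ) else 0))
          + (∑ t' ∈ R N, (if t.1 = t'.2.1 then (1:ℝ) else 0))
          + (∑ t' ∈ R N, (if t.2.1 = t'.1 then (1:ℝ) else 0))
          + (∑ t' ∈ R N, (if t.2.1 = t'.2.1 then (1:ℝ) else 0))
          + (∑ t' ∈ R N, (if t.2.2 = t'.2.2 then (1:ℝ) else 0)) := by
        rw [hχ]
        simp only [← Finset.sum_add_distrib]
      rw [hsplit]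
      have c1 : (∑ _t' ∈ R N, (if t.1 = t.2.1 then (1:ℝ) else 0))
          = (N:ℝ)^3 * (if t.1 = t.2.1 then (1:ℝ) else 0) := by
        rw [Finset.sum_const, hRcard, nsmul_eq_mul]; push_cast; ring
      have b2 := hsumd N
      have b3 := hsum1 N t.1
      have b4 := hsum21 N t.1
      have b5 := hsum1 N t.2.1
      have b6 := hsum21 N t.2.1
      have b7 := hsum22 N t.2.2
      linarith
    have outer : ∑ t ∈ R N, ((N:ℝ)^3 * (if t.1 = t.2.1 then (1:ℝ) else 0) + 6 * (N:ℝ)^2)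
        ≤ 7 * (N:ℝ)^5 := by
      rw [Finset.sum_add_distrib, ← Finset.mul_sum, Finset.sum_const, hRcard, nsmul_eq_mul]
      have hd := hsumd N
      have hN3 : (0:ℝ) ≤ (N:ℝ)^3 := by positivity
      have h1 : (N:ℝ)^3 * (∑ t ∈ R N, (if t.1 = t.2.1 then (1:ℝ) else 0))
          ≤ (N:ℝ)^3 * (N:ℝ)^2 := mul_le_mul_of_nonneg_left hd hN3
      have hcast : ((N^3 : ℕ) : ℝ) = (N:ℝ)^3 := by push_cast; ring
      rw [hcast]
      nlinarith [sq_nonneg ((N:ℝ))]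
    have e4 : ∑ t ∈ R N, ∑ t' ∈ R N, χ t t' ≤ 7 * (N:ℝ)^5 :=
      le_trans (Finset.sum_le_sum inner) outer
    have e3 : ∀ t ∈ R N, ∑ t' ∈ R N, (C * C) * χ t t' = (C * C) * ∑ t' ∈ R N, χ t t' :=
      fun t _ => (Finset.mul_sum _ _ _).symm
    rw [Finset.sum_congr rfl e3, ← Finset.mul_sum]
    calc (C * C) * (∑ t ∈ R N, ∑ t' ∈ R N, χ t t') ≤ (C * C) * (7 * (N:ℝ)^5) :=
        mul_le_mul_of_nonneg_left e4 hCC0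
      _ = 7 * (C * C) * (N:ℝ)^5 := by ring
  set T : ℕ → Ω → ℝ := fun N ω => ((N:ℝ)^3)⁻¹ * S N ω with hT
  have hSSfun : ∀ N : ℕ, (fun ω => S N ω * S N ω)
      = fun ω => ∑ t ∈ R N, ∑ t' ∈ R N, X t ω * X t' ω := by
    intro N; funext ω; rw [hS]; dsimp only; rw [Finset.sum_mul_sum]
  have hSSint : ∀ N : ℕ, Integrable (fun ω => S N ω * S N ω) P := by
    intro N
    rw [hSSfun N]
    exact integrable_finset_sum _ fun t _ => integrable_finset_sum _ fun t' _ => hXXint t t'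
  have hTTint : ∀ N : ℕ, Integrable (fun ω => T N ω * T N ω) P := by
    intro N
    have : (fun ω => T N ω * T N ω)
        = fun ω => (((N:ℝ)^3)⁻¹ * ((N:ℝ)^3)⁻¹) * (S N ω * S N ω) := by
      funext ω; rw [hT]; ring
    rw [this]
    exact (hSSint N).const_mul _
  -- Chebyshev bound along the subsequence (m+1)^2
  have hcheb : ∀ (m : ℕ) (ε : ℝ), 0 < ε →
      P {ω | ε ≤ |T ((m+1)^2) ω|}
        ≤ ENNReal.ofReal ((7 * (C * C) / ε^2) * (1 / ((m:ℝ)+1)^2)) := by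
    intro m ε hε
    set N : ℕ := (m+1)^2 with hNdef
    have hN1 : (1:ℝ) ≤ (N:ℝ) := by
      have : 1 ≤ N := Nat.one_le_iff_ne_zero.mpr (by positivity)
      exact_mod_cast this
    have hTT : ∫ ω, T N ω * T N ω ∂P ≤ 7 * (C * C) / ((m:ℝ)+1)^2 := by
      have hfun : (fun ω => T N ω * T N ω)
          = fun ω => (((N:ℝ)^3)⁻¹ * ((N:ℝ)^3)⁻¹) * (S N ω * S N ω) := by
        funext ω; rw [hT]; ring
      rw [hfun, integral_const_mul]
      have hb := hmom N
      have hpos : (0:ℝ) < (N:ℝ)^3 := by positivity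
      have h1 : (((N:ℝ)^3)⁻¹ * ((N:ℝ)^3)⁻¹) * ∫ ω, S N ω * S N ω ∂P
          ≤ (((N:ℝ)^3)⁻¹ * ((N:ℝ)^3)⁻¹) * (7 * (C * C) * (N:ℝ)^5) := by
        apply mul_le_mul_of_nonneg_left hb
        positivity
      refine h1.trans ?_
      have hNcast : (N:ℝ) = ((m:ℝ)+1)^2 := by rw [hNdef]; push_cast; ring
      rw [hNcast]
      have hm1 : (0:ℝ) < (m:ℝ)+1 := by positivity
      have heq : ((((m:ℝ)+1)^2)^3)⁻¹ * ((((m:ℝ)+1)^2)^3)⁻¹ * (7*(C*C)*(((m:ℝ)+1)^2)^5)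
          = 7*(C*C)/((m:ℝ)+1)^2 := by
        field_simp
      rw [heq]
    have hsubset : {ω | ε ≤ |T N ω|} ⊆ {ω | ε^2 ≤ T N ω * T N ω} := by
      intro ω hω
      simp only [Set.mem_setOf_eq] at hω ⊢
      have : ε^2 ≤ |T N ω|^2 := pow_le_pow_left₀ hε.le hω 2
      calc ε^2 ≤ |T N ω|^2 := this
        _ = T N ω * T N ω := by rw [sq_abs, sq]
    have hmark := mul_meas_ge_le_integral_of_nonneg
      (ae_of_all P (fun ω => mul_self_nonneg (T N ω))) (hTTint N) (ε^2)
    have htoReal : (P {ω | ε ≤ |T N ω|}).toReal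
        ≤ (7 * (C * C) / ε^2) * (1 / ((m:ℝ)+1)^2) := by
      have h2 : (P {ω | ε ≤ |T N ω|}).toReal ≤ (P {ω | ε^2 ≤ T N ω * T N ω}).toReal := by
        apply ENNReal.toReal_mono (measure_ne_top P _)
        exact measure_mono hsubset
      have h3 : ε^2 * (P {ω | ε^2 ≤ T N ω * T N ω}).toReal ≤ 7 * (C * C) / ((m:ℝ)+1)^2 :=
        hmark.trans hTT
      have hε2 : (0:ℝ) < ε^2 := by positivity
      calc (P {ω | ε ≤ |T N ω|}).toReal ≤ (P {ω | ε^2 ≤ T N ω * T N ω}).toReal := h2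
        _ ≤ (7 * (C * C) / ((m:ℝ)+1)^2) / ε^2 := by
            rw [le_div_iff₀ hε2]; linarith [h3]
        _ = (7 * (C * C) / ε^2) * (1 / ((m:ℝ)+1)^2) := by ring
    rw [ENNReal.le_ofReal_iff_toReal_le (measure_ne_top P _) (by positivity)]
    exact htoReal
  -- Borel–Cantelli
  have hBC : ∀ n : ℕ, ∀ᵐ ω ∂P, ∀ᶠ m in atTop, ¬ (1/((n:ℝ)+1) ≤ |T ((m+1)^2) ω|) := by
    intro n
    have hεpos : (0:ℝ) < 1/((n:ℝ)+1) := by positivity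
    have hsummable : Summable (fun m : ℕ => (7 * (C * C) / (1/((n:ℝ)+1))^2) * (1 / ((m:ℝ)+1)^2)) := by
      apply Summable.mul_left
      have h2 : Summable (fun m : ℕ => 1 / ((m:ℝ))^2) :=
        Real.summable_one_div_nat_pow.mpr one_lt_two
      have := (summable_nat_add_iff 1).mpr h2
      refine this.congr (fun m => ?_)
      push_cast; ring_nf
    have hne : (∑' m, P {ω | 1/((n:ℝ)+1) ≤ |T ((m+1)^2) ω|}) ≠ ⊤ := by
      have hle := ENNReal.tsum_le_tsum (fun m => hcheb m (1/((n:ℝ)+1)) hεpos)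
      have heq : (∑' (m : ℕ), ENNReal.ofReal ((7 * (C * C) / (1/((n:ℝ)+1))^2) * (1 / ((m:ℝ)+1)^2)))
          = ENNReal.ofReal (∑' (m : ℕ), (7 * (C * C) / (1/((n:ℝ)+1))^2) * (1 / ((m:ℝ)+1)^2)) :=
        (ENNReal.ofReal_tsum_of_nonneg (fun m => by positivity) hsummable).symm
      rw [heq] at hle
      exact ne_top_of_le_ne_top ENNReal.ofReal_ne_top hle
    have := ae_eventually_notMem hne
    filter_upwards [this] with ω hω
    filter_upwards [hω] with m hm
    exact hm
  have hae : ∀ᵐ ω ∂P, ∀ n : ℕ, ∀ᶠ m in atTop, ¬ (1/((n:ℝ)+1) ≤ |T ((m+1)^2) ω|) :=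
    ae_all_iff.mpr hBC
  -- nonemptiness and C ≥ 0
  have hΩne : Nonempty Ω := by
    by_contra h
    rw [not_nonempty_iff] at h
    have h1 : P Set.univ = 1 := measure_univ
    rw [Set.univ_eq_empty_iff.mpr h] at h1
    simp at h1
  obtain ⟨ω₀⟩ := hΩne
  have hC0 : (0:ℝ) ≤ C := le_trans (abs_nonneg _) (hHbdd (U 0 ω₀, U 1 ω₀, V 0 ω₀))
  have hXabs : ∀ t (ω : Ω), |X t ω| ≤ C := fun t ω => hHbdd _
  -- identify theorem's triple sum with S
  have hTeq : ∀ (ω : Ω) (N : ℕ), (∑ i ∈ Finset.range N, ∑ j ∈ Finset.range N,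
      ∑ k ∈ Finset.range N, H (U i ω, U j ω, V k ω)) = S N ω := by
    intro ω N
    rw [hS]; dsimp only; rw [hR]; dsimp only
    rw [Finset.sum_product]
    refine Finset.sum_congr rfl fun i _ => ?_
    rw [Finset.sum_product]
  -- deterministic increment bound
  have hSdiff : ∀ (ω : Ω) (M N : ℕ), M ≤ N →
      |S N ω - S M ω| ≤ C * ((N:ℝ)^3 - (M:ℝ)^3) := by
    intro ω M N h
    have hsub : R M ⊆ R N := by
      rw [hR]
      exact Finset.product_subset_product (Finset.range_subset_range.mpr h)
        (Finset.product_subset_product (Finset.range_subset_range.mpr h) (Finset.range_subset_range.mpr h))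
    have hdiffeq : S N ω - S M ω = ∑ t ∈ R N \ R M, X t ω := by
      rw [hS]; dsimp only; rw [Finset.sum_sdiff_eq_sub hsub]
    rw [hdiffeq]
    calc |∑ t ∈ R N \ R M, X t ω| ≤ ∑ t ∈ R N \ R M, |X t ω| :=
          Finset.abs_sum_le_sum_abs _ _
      _ ≤ (R N \ R M).card • C := Finset.sum_le_card_nsmul _ _ C (fun t _ => hXabs t ω)
      _ = ((R N \ R M).card : ℝ) * C := nsmul_eq_mul _ _
      _ = ((N^3 - M^3 : ℕ) : ℝ) * C := by rw [Finset.card_sdiff_of_subset hsub, hRcard, hRcard]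
      _ = ((N:ℝ)^3 - (M:ℝ)^3) * C := by
          rw [Nat.cast_sub (Nat.pow_le_pow_left h 3)]; push_cast; ring
      _ = C * ((N:ℝ)^3 - (M:ℝ)^3) := by ring
  have habsT : ∀ (ω : Ω) (K : ℕ), |T K ω| = (((K:ℝ))^3)⁻¹ * |S K ω| := by
    intro ω K; rw [hT]; dsimp only
    rw [abs_mul, abs_inv, abs_pow, Nat.abs_cast]
  -- main a.e. argument
  filter_upwards [hae] with ω hω
  have hconv : Tendsto (fun m => T ((m+1)^2) ω) atTop (nhds 0) := by
    rw [NormedAddCommGroup.tendsto_nhds_zero]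
    intro ε hε
    obtain ⟨n, hn⟩ := exists_nat_one_div_lt hε
    filter_upwards [hω n] with m hm
    rw [Real.norm_eq_abs]
    exact lt_trans (not_le.mp hm) hn
  have hgoal : Tendsto (fun N => T N ω) atTop (nhds 0) := by
    rw [NormedAddCommGroup.tendsto_nhds_zero]
    intro ε hε
    obtain ⟨m₁, hm₁⟩ := eventually_atTop.mp
      ((NormedAddCommGroup.tendsto_nhds_zero.mp hconv) (ε/2) (by positivity))
    have hrt : Tendsto (fun m : ℕ => C * (1 - ((m:ℝ)/((m:ℝ)+1))^6)) atTop (nhds 0) := by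
      have l1 : Tendsto (fun m : ℕ => ((m:ℝ)/((m:ℝ)+1))) atTop (nhds 1) :=
        tendsto_natCast_div_add_atTop (1:ℝ)
      have l2 : Tendsto (fun m : ℕ => ((m:ℝ)/((m:ℝ)+1))^6) atTop (nhds 1) := by
        have := l1.pow 6
        simpa using this
      have l3 : Tendsto (fun m : ℕ => (1:ℝ) - ((m:ℝ)/((m:ℝ)+1))^6) atTop (nhds (1 - 1)) :=
        tendsto_const_nhds.sub l2
      have l4 := l3.const_mul C
      simpa using l4
    obtain ⟨m₂, hm₂⟩ := eventually_atTop.mp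
      ((NormedAddCommGroup.tendsto_nhds_zero.mp hrt) (ε/2) (by positivity))
    refine eventually_atTop.mpr ⟨(max (m₁+1) (max m₂ 1))^2, fun N hN => ?_⟩
    set M₀ := max (m₁+1) (max m₂ 1) with hM₀
    set m := Nat.sqrt N with hmdef
    have hM₀m : M₀ ≤ m := by
      have := Nat.sqrt_le_sqrt hN
      rwa [Nat.sqrt_eq'] at this
    have hm1 : 1 ≤ m := le_trans (le_trans (le_max_right m₂ 1) (le_max_right (m₁+1) _)) hM₀m
    have hmsq : m^2 ≤ N := Nat.sqrt_le' N
    have hNlt : N < (m+1)^2 := Nat.lt_succ_sqrt' N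
    have hNr : ((m:ℝ))^2 ≤ (N:ℝ) := by exact_mod_cast hmsq
    have hNr2 : (N:ℝ) < ((m:ℝ)+1)^2 := by exact_mod_cast hNlt
    have hmr : (1:ℝ) ≤ (m:ℝ) := by exact_mod_cast hm1
    have hNpos : (0:ℝ) < (N:ℝ) := by nlinarith
    have hn3 : (0:ℝ) < (N:ℝ)^3 := by positivity
    have hX0 : (0:ℝ) ≤ |T (m^2) ω| := abs_nonneg _
    have hcast : ((m^2:ℕ):ℝ) = (m:ℝ)^2 := by push_cast; ring
    have hSm : |S (m^2) ω| = (m:ℝ)^6 * |T (m^2) ω| := by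
      have h1 := habsT ω (m^2)
      rw [hcast] at h1
      rw [h1]
      have hm0 : (0:ℝ) < (m:ℝ) := by linarith
      field_simp
    have htri : |S N ω| ≤ |S (m^2) ω| + C * ((N:ℝ)^3 - (m:ℝ)^6) := by
      have hd := hSdiff ω (m^2) N hmsq
      rw [hcast] at hd
      have habs := abs_sub_abs_le_abs_sub (S N ω) (S (m^2) ω)
      have hpow : ((m:ℝ)^2)^3 = (m:ℝ)^6 := by ring
      rw [hpow] at hd
      linarith
    have s1 : (m:ℝ)^6 ≤ (N:ℝ)^3 := by
      have hp := pow_le_pow_left₀ (by positivity : (0:ℝ) ≤ (m:ℝ)^2) hNr 3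
      calc (m:ℝ)^6 = ((m:ℝ)^2)^3 := by ring
        _ ≤ (N:ℝ)^3 := hp
    have s2 : (N:ℝ)^3 ≤ ((m:ℝ)+1)^6 := by
      have hp := pow_le_pow_left₀ hNpos.le hNr2.le 3
      calc (N:ℝ)^3 ≤ (((m:ℝ)+1)^2)^3 := hp
        _ = ((m:ℝ)+1)^6 := by ring
    have key : |T N ω| ≤ |T (m^2) ω| + C * (1 - ((m:ℝ)/((m:ℝ)+1))^6) := by
      have c1 : |T N ω| = ((N:ℝ)^3)⁻¹ * |S N ω| := habsT ω N
      have c2 : ((N:ℝ)^3)⁻¹ * |S N ω|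
          ≤ ((N:ℝ)^3)⁻¹ * ((m:ℝ)^6 * |T (m^2) ω| + C * ((N:ℝ)^3 - (m:ℝ)^6)) := by
        apply mul_le_mul_of_nonneg_left _ (inv_nonneg.mpr hn3.le)
        rw [← hSm]; exact htri
      have c3 : ((N:ℝ)^3)⁻¹ * ((m:ℝ)^6 * |T (m^2) ω| + C * ((N:ℝ)^3 - (m:ℝ)^6))
          = ((m:ℝ)^6/(N:ℝ)^3) * |T (m^2) ω| + C * (1 - (m:ℝ)^6/(N:ℝ)^3) := by
        field_simp
      have hr1 : (m:ℝ)^6/(N:ℝ)^3 ≤ 1 := by rw [div_le_one hn3]; exact s1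
      have hf0 : (0:ℝ) ≤ (m:ℝ)^6/(N:ℝ)^3 := by positivity
      have hq : ((m:ℝ)/((m:ℝ)+1))^6 = (m:ℝ)^6/((m:ℝ)+1)^6 := div_pow _ _ _
      have hr2 : (m:ℝ)^6/((m:ℝ)+1)^6 ≤ (m:ℝ)^6/(N:ℝ)^3 := by
        rw [div_le_div_iff₀ (by positivity) hn3]
        exact mul_le_mul_of_nonneg_left s2 (by positivity)
      have t1 : ((m:ℝ)^6/(N:ℝ)^3) * |T (m^2) ω| ≤ |T (m^2) ω| := by nlinarith
      have t2 : C * (1 - (m:ℝ)^6/(N:ℝ)^3) ≤ C * (1 - ((m:ℝ)/((m:ℝ)+1))^6) := by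
        rw [hq]
        apply mul_le_mul_of_nonneg_left _ hC0
        linarith
      calc |T N ω| = ((N:ℝ)^3)⁻¹ * |S N ω| := c1
        _ ≤ ((N:ℝ)^3)⁻¹ * ((m:ℝ)^6 * |T (m^2) ω| + C * ((N:ℝ)^3 - (m:ℝ)^6)) := c2
        _ = ((m:ℝ)^6/(N:ℝ)^3) * |T (m^2) ω| + C * (1 - (m:ℝ)^6/(N:ℝ)^3) := c3
        _ ≤ |T (m^2) ω| + C * (1 - ((m:ℝ)/((m:ℝ)+1))^6) := by linarith
    have hm₁M : m₁ + 1 ≤ M₀ := le_max_left _ _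
    have hm₂M : m₂ ≤ M₀ := le_trans (le_max_left m₂ 1) (le_max_right (m₁+1) _)
    have e1 : |T (m^2) ω| < ε/2 := by
      have h := hm₁ (m-1) (by omega)
      rw [Real.norm_eq_abs] at h
      have hmm : (m-1)+1 = m := by omega
      rwa [hmm] at h
    have e2 : C * (1 - ((m:ℝ)/((m:ℝ)+1))^6) < ε/2 := by
      have h := hm₂ m (by omega)
      rw [Real.norm_eq_abs] at h
      calc C * (1 - ((m:ℝ)/((m:ℝ)+1))^6) ≤ |C * (1 - ((m:ℝ)/((m:ℝ)+1))^6)| := le_abs_self _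
        _ < ε/2 := h
    rw [Real.norm_eq_abs]
    linarith
  have hfin : (fun N : ℕ => ((N:ℝ)^3)⁻¹ * ∑ i ∈ Finset.range N, ∑ j ∈ Finset.range N,
      ∑ k ∈ Finset.range N, H (U i ω, U j ω, V k ω)) = fun N => T N ω := by
    funext N
    rw [hTeq ω N]
  rw [hfin]
  exact hgoal
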